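/- Let 𝓜 be a nonempty, convex, compact set of real symmetric positive semidefinite d×d matrices, let r ≥ 1, define V(M) = sup_{‖δ‖ ≤ 1} δᵀ M δ, and assume that every minimizer M* of V over 𝓜 has largest eigenvalue of multiplicity at most r, i.e. the eigenspace { v : M* v = V(M*) v } has dimension at most r. Then there exist M* ∈ 𝓜 and a real PSD matrix Δ* with trace(Δ*) ≤ 1 and rank(Δ*) ≤ r such that (a) trace(M*·Δ) ≤ trace(M*·Δ*) for every PSD Δ with trace(Δ) ≤ 1 and rank(Δ) ≤ r, and (b) trace(M*·Δ*) ≤ trace(M·Δ*) for every M ∈ 𝓜. In particular, the adversary has an equilibrium strategy supported on an r-dimensional subspace of ℝ^d (the column space of Δ*). (Theorem 2, part 2, rank-constrained saddle-point form.) -/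

import Mathlib

open Matrix

namespace UadAux

variable {d : ℕ}

/-- The sup of the quadratic form over the unit ball. -/
noncomputable def g (N : Matrix (Fin d) (Fin d) ℝ) : ℝ :=
  sSup ((fun δ : EuclideanSpace ℝ (Fin d) => δ ⬝ᵥ N.mulVec δ) ''
    {δ : EuclideanSpace ℝ (Fin d) | ‖δ‖ ≤ 1})

lemma sq_sum_le {δ : EuclideanSpace ℝ (Fin d)} (hδ : ‖δ‖ ≤ 1) :
    ∑ j, δ j ^ 2 ≤ 1 := by
  have h2 : Real.sqrt (∑ j, δ j ^ 2) ≤ 1 := by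
    rw [show Real.sqrt (∑ j, δ j ^ 2) = ‖δ‖ from ?_]
    · exact hδ
    · rw [EuclideanSpace.norm_eq]
      congr 1
      refine Finset.sum_congr rfl fun j _ => ?_
      rw [Real.norm_eq_abs, sq_abs]
  calc ∑ j, δ j ^ 2 = Real.sqrt (∑ j, δ j ^ 2) ^ 2 := by
        rw [Real.sq_sqrt (Finset.sum_nonneg fun j _ => sq_nonneg _)]
    _ ≤ 1 := pow_le_one₀ (Real.sqrt_nonneg _) h2

lemma coord_abs_le_one {δ : EuclideanSpace ℝ (Fin d)} (hδ : ‖δ‖ ≤ 1) (i : Fin d) :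
    |δ i| ≤ 1 := by
  rw [← sq_le_one_iff_abs_le_one]
  exact le_trans (Finset.single_le_sum (fun j _ => sq_nonneg (δ j)) (Finset.mem_univ i))
    (sq_sum_le hδ)

lemma quad_le_sum_abs (N : Matrix (Fin d) (Fin d) ℝ) {δ : EuclideanSpace ℝ (Fin d)}
    (hδ : ‖δ‖ ≤ 1) : δ ⬝ᵥ N.mulVec δ ≤ ∑ i, ∑ j, |N i j| := by
  calc δ ⬝ᵥ N.mulVec δ = ∑ i, ∑ j, δ i * (N i j * δ j) := by
        simp [dotProduct, Matrix.mulVec, Finset.mul_sum]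
    _ ≤ ∑ i, ∑ j, |N i j| := by
        refine Finset.sum_le_sum fun i _ => Finset.sum_le_sum fun j _ => ?_
        calc δ i * (N i j * δ j) ≤ |δ i * (N i j * δ j)| := le_abs_self _
          _ = |δ i| * |N i j| * |δ j| := by rw [abs_mul, abs_mul]; ring
          _ ≤ 1 * |N i j| * 1 :=
              mul_le_mul
                (mul_le_mul_of_nonneg_right (coord_abs_le_one hδ i) (abs_nonneg _))
                (coord_abs_le_one hδ j) (abs_nonneg _) (by positivity)
          _ = |N i j| := by ring

lemma zero_mem_quadSet (N : Matrix (Fin d) (Fin d) ℝ) :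
    (0 : ℝ) ∈ ((fun δ : EuclideanSpace ℝ (Fin d) => δ ⬝ᵥ N.mulVec δ) ''
      {δ : EuclideanSpace ℝ (Fin d) | ‖δ‖ ≤ 1}) := by
  refine ⟨0, by simp, ?_⟩
  show (0 : Fin d → ℝ) ⬝ᵥ N.mulVec 0 = 0
  simp

lemma bddAbove_quadSet (N : Matrix (Fin d) (Fin d) ℝ) :
    BddAbove ((fun δ : EuclideanSpace ℝ (Fin d) => δ ⬝ᵥ N.mulVec δ) ''
      {δ : EuclideanSpace ℝ (Fin d) | ‖δ‖ ≤ 1}) := by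
  refine ⟨∑ i, ∑ j, |N i j|, ?_⟩
  rintro y ⟨δ, hδ, rfl⟩
  exact quad_le_sum_abs N hδ

lemma g_nonneg (N : Matrix (Fin d) (Fin d) ℝ) : 0 ≤ g N :=
  le_csSup (bddAbove_quadSet N) (zero_mem_quadSet N)

lemma le_g (N : Matrix (Fin d) (Fin d) ℝ) {δ : EuclideanSpace ℝ (Fin d)} (hδ : ‖δ‖ ≤ 1) :
    δ ⬝ᵥ N.mulVec δ ≤ g N :=
  le_csSup (bddAbove_quadSet N) ⟨δ, hδ, rfl⟩

lemma g_le (N : Matrix (Fin d) (Fin d) ℝ) {b : ℝ}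
    (hb : ∀ δ : EuclideanSpace ℝ (Fin d), ‖δ‖ ≤ 1 → δ ⬝ᵥ N.mulVec δ ≤ b) : g N ≤ b := by
  refine csSup_le ⟨0, zero_mem_quadSet N⟩ ?_
  rintro y ⟨δ, hδ, rfl⟩
  exact hb δ hδ

lemma smul_quad (N : Matrix (Fin d) (Fin d) ℝ) (y : Fin d → ℝ) (a : ℝ) :
    (a • y) ⬝ᵥ N.mulVec (a • y) = a * (a * (y ⬝ᵥ N.mulVec y)) := by
  rw [Matrix.mulVec_smul, smul_dotProduct, dotProduct_smul, smul_eq_mul, smul_eq_mul]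

lemma quad_le_g_mul (N : Matrix (Fin d) (Fin d) ℝ) (x : Fin d → ℝ) :
    x ⬝ᵥ N.mulVec x ≤ g N * (x ⬝ᵥ x) := by
  rcases eq_or_ne x 0 with rfl | hx
  · simp
  · have hs : 0 < ∑ i, x i ^ 2 := by
      obtain ⟨i, hi⟩ : ∃ i, x i ≠ 0 := by
        by_contra h
        push_neg at h
        exact hx (funext h)
      exact Finset.sum_pos' (fun j _ => sq_nonneg _) ⟨i, Finset.mem_univ i, by positivity⟩
    set s : ℝ := ∑ i, x i ^ 2 with hs_def
    set t : ℝ := Real.sqrt s with ht_def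
    have ht : 0 < t := Real.sqrt_pos.2 hs
    have ht2 : t ^ 2 = s := Real.sq_sqrt hs.le
    set δ : EuclideanSpace ℝ (Fin d) := WithLp.toLp 2 (t⁻¹ • x) with hδ_def
    have hδnorm : ‖δ‖ = 1 := by
      rw [EuclideanSpace.norm_eq]
      have : ∀ j, ‖δ j‖ ^ 2 = t⁻¹ ^ 2 * x j ^ 2 := by
        intro j
        show ‖t⁻¹ * x j‖ ^ 2 = _
        rw [Real.norm_eq_abs, sq_abs, mul_pow]
      rw [Finset.sum_congr rfl fun j _ => this j, ← Finset.mul_sum, ← hs_def,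
        inv_pow, ← ht2]
      rw [inv_mul_cancel₀ (by positivity)]
      exact Real.sqrt_one
    have hq : δ ⬝ᵥ N.mulVec δ ≤ g N := le_g N (by rw [hδnorm])
    have hquad : (δ : Fin d → ℝ) ⬝ᵥ N.mulVec δ = t⁻¹ * (t⁻¹ * (x ⬝ᵥ N.mulVec x)) :=
      smul_quad N x t⁻¹
    have hxx : x ⬝ᵥ x = s := by
      simp [dotProduct, hs_def, sq]
    rw [hquad] at hq
    have := mul_le_mul_of_nonneg_left hq (le_of_lt (by positivity : (0:ℝ) < t * t))
    calc x ⬝ᵥ N.mulVec x = (t * t) * (t⁻¹ * (t⁻¹ * (x ⬝ᵥ N.mulVec x))) := by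
          field_simp
      _ ≤ (t * t) * g N := this
      _ = g N * (x ⬝ᵥ x) := by rw [hxx, ← ht2]; ring

lemma real_conjTranspose (A : Matrix (Fin d) (Fin d) ℝ) : Aᴴ = Aᵀ := by
  ext i j; simp [conjTranspose_apply]

lemma real_transpose_eq_of_isHermitian {M : Matrix (Fin d) (Fin d) ℝ}
    (h : M.IsHermitian) : Mᵀ = M := by
  calc Mᵀ = Mᴴ := by ext i j; simp [conjTranspose_apply]
    _ = M := h

lemma trace_transpose_mul_self_nonneg (A : Matrix (Fin d) (Fin d) ℝ) :
    0 ≤ (Aᵀ * A).trace := by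
  rw [Matrix.trace]
  refine Finset.sum_nonneg fun j _ => ?_
  rw [Matrix.diag_apply, Matrix.mul_apply]
  exact Finset.sum_nonneg fun i _ => by
    rw [Matrix.transpose_apply]; exact mul_self_nonneg _

lemma eq_zero_of_trace_transpose_mul_self (A : Matrix (Fin d) (Fin d) ℝ)
    (h : (Aᵀ * A).trace = 0) : A = 0 := by
  have hsum : ∑ j, ∑ i, A i j * A i j = 0 := by
    rw [← h, Matrix.trace]
    refine Finset.sum_congr rfl fun j _ => ?_
    rw [Matrix.diag_apply, Matrix.mul_apply]
    exact Finset.sum_congr rfl fun i _ => by rw [Matrix.transpose_apply]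
  ext i j
  have h1 := (Finset.sum_eq_zero_iff_of_nonneg (fun j _ =>
    Finset.sum_nonneg fun i _ => mul_self_nonneg (A i j))).mp hsum j (Finset.mem_univ j)
  have h2 := (Finset.sum_eq_zero_iff_of_nonneg (fun i _ =>
    mul_self_nonneg (A i j))).mp h1 i (Finset.mem_univ i)
  simpa [mul_self_eq_zero] using h2

open scoped MatrixOrder in
lemma trace_psd_mul_psd_nonneg {P Q : Matrix (Fin d) (Fin d) ℝ}
    (hP : P.PosSemidef) (hQ : Q.PosSemidef) : 0 ≤ (P * Q).trace := by
  obtain ⟨B, hB⟩ := CStarAlgebra.nonneg_iff_eq_star_mul_self.mp hP.nonneg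
  obtain ⟨C, hC⟩ := CStarAlgebra.nonneg_iff_eq_star_mul_self.mp hQ.nonneg
  have hB' : P = Bᵀ * B := by rw [hB, star_eq_conjTranspose, real_conjTranspose]
  have hC' : Q = Cᵀ * C := by rw [hC, star_eq_conjTranspose, real_conjTranspose]
  have key : (P * Q).trace = ((B * Cᵀ)ᵀ * (B * Cᵀ)).trace := by
    rw [hB', hC']
    rw [Matrix.transpose_mul, Matrix.transpose_transpose]
    calc (Bᵀ * B * (Cᵀ * C)).trace = ((Bᵀ * B * Cᵀ) * C).trace := by
          rw [Matrix.mul_assoc (Bᵀ * B)]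
      _ = (C * (Bᵀ * B * Cᵀ)).trace := by rw [Matrix.trace_mul_comm]
      _ = (C * Bᵀ * (B * Cᵀ)).trace := by
          rw [Matrix.mul_assoc C Bᵀ, Matrix.mul_assoc Bᵀ B Cᵀ]
  rw [key]
  exact trace_transpose_mul_self_nonneg _

open scoped MatrixOrder in
lemma psd_mul_psd_eq_zero_of_trace_eq_zero {P Q : Matrix (Fin d) (Fin d) ℝ}
    (hP : P.PosSemidef) (hQ : Q.PosSemidef) (h : (P * Q).trace = 0) : P * Q = 0 := by
  classical
  set SP := CFC.sqrt P with hSP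
  set SQ := CFC.sqrt Q with hSQ
  have hSPt : SPᵀ = SP := real_transpose_eq_of_isHermitian (CFC.sqrt_nonneg P).posSemidef.isHermitian
  have hSQt : SQᵀ = SQ := real_transpose_eq_of_isHermitian (CFC.sqrt_nonneg Q).posSemidef.isHermitian
  have hSP2 : SP * SP = P := CFC.sqrt_mul_sqrt_self P hP.nonneg
  have hSQ2 : SQ * SQ = Q := CFC.sqrt_mul_sqrt_self Q hQ.nonneg
  set A := SP * SQ with hA
  have htr : (Aᵀ * A).trace = (P * Q).trace := by
    rw [hA, Matrix.transpose_mul, hSPt, hSQt]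
    calc (SQ * SP * (SP * SQ)).trace = ((SQ * SP * SP) * SQ).trace := by
          rw [Matrix.mul_assoc (SQ * SP)]
      _ = (SQ * (SQ * SP * SP)).trace := by rw [Matrix.trace_mul_comm]
      _ = ((SQ * SQ) * (SP * SP)).trace := by
          rw [Matrix.mul_assoc SQ SP SP, ← Matrix.mul_assoc SQ SQ]
      _ = (Q * P).trace := by rw [hSP2, hSQ2]
      _ = (P * Q).trace := Matrix.trace_mul_comm _ _
  have hA0 : A = 0 := eq_zero_of_trace_transpose_mul_self A (by rw [htr, h])
  calc P * Q = SP * (SP * SQ) * SQ := by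
        rw [← Matrix.mul_assoc, hSP2, Matrix.mul_assoc, hSQ2]
    _ = 0 := by rw [← hA, hA0, Matrix.mul_zero, Matrix.zero_mul]

lemma psd_smul {a : ℝ} {P : Matrix (Fin d) (Fin d) ℝ} (ha : 0 ≤ a) (hP : P.PosSemidef) :
    (a • P).PosSemidef := by
  refine Matrix.PosSemidef.of_dotProduct_mulVec_nonneg ?_ fun x => ?_
  · show (a • P)ᴴ = a • P
    rw [Matrix.conjTranspose_smul, hP.1.eq]
    simp
  · rw [Matrix.smul_mulVec, dotProduct_smul, smul_eq_mul]
    exact mul_nonneg ha (hP.dotProduct_mulVec_nonneg x)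

lemma psd_smul_one_sub {N : Matrix (Fin d) (Fin d) ℝ} {cc : ℝ}
    (hN : N.IsHermitian) (hge : ∀ x : Fin d → ℝ, x ⬝ᵥ N.mulVec x ≤ cc * (x ⬝ᵥ x)) :
    (cc • (1 : Matrix (Fin d) (Fin d) ℝ) - N).PosSemidef := by
  refine Matrix.PosSemidef.of_dotProduct_mulVec_nonneg ?_ fun x => ?_
  · show (cc • 1 - N)ᴴ = cc • 1 - N
    rw [Matrix.conjTranspose_sub, Matrix.conjTranspose_smul, Matrix.conjTranspose_one, hN.eq]
    simp
  · have hstar : star x = x := by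
      funext i; simp
    rw [hstar, Matrix.sub_mulVec, Matrix.smul_mulVec, Matrix.one_mulVec,
      dotProduct_sub, dotProduct_smul, smul_eq_mul]
    have := hge x
    linarith

lemma g_smul_one_sub_psd (N : Matrix (Fin d) (Fin d) ℝ) (hN : N.IsHermitian) :
    (g N • (1 : Matrix (Fin d) (Fin d) ℝ) - N).PosSemidef :=
  psd_smul_one_sub hN (quad_le_g_mul N)

lemma trace_mul_le_g {M Δ : Matrix (Fin d) (Fin d) ℝ} (hM : M.IsHermitian)
    (hΔ : Δ.PosSemidef) : (M * Δ).trace ≤ g M * Δ.trace := by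
  have h := trace_psd_mul_psd_nonneg (g_smul_one_sub_psd M hM) hΔ
  rw [Matrix.sub_mul, Matrix.smul_mul, Matrix.one_mul, Matrix.trace_sub,
    Matrix.trace_smul, smul_eq_mul] at h
  linarith

lemma vecMulVec_posSemidef (x : Fin d → ℝ) : (Matrix.vecMulVec x x).PosSemidef := by
  refine Matrix.PosSemidef.of_dotProduct_mulVec_nonneg ?_ fun y => ?_
  · ext i j; simp [Matrix.vecMulVec_apply, Matrix.conjTranspose_apply, mul_comm]
  · have hstar : star y = y := by funext i; simp
    rw [hstar]
    have : y ⬝ᵥ (Matrix.vecMulVec x x).mulVec y = (x ⬝ᵥ y) * (x ⬝ᵥ y) := by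
      simp only [dotProduct, Matrix.mulVec, Matrix.vecMulVec_apply, Finset.sum_mul,
        Finset.mul_sum]
      rw [Finset.sum_comm]
      refine Finset.sum_congr rfl fun i _ => Finset.sum_congr rfl fun j _ => ?_
      ring
    rw [this]
    exact mul_self_nonneg _

lemma quad_sym_eq (x : Fin d → ℝ) (Δ : Matrix (Fin d) (Fin d) ℝ) :
    x ⬝ᵥ ((2⁻¹ : ℝ) • (Δ + Δᵀ)).mulVec x = ((Matrix.vecMulVec x x) * Δ).trace := by
  have e0 : ∀ B : Matrix (Fin d) (Fin d) ℝ, x ⬝ᵥ B.mulVec x = ∑ i, ∑ j, x i * (B i j * x j) := by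
    intro B; simp [dotProduct, Matrix.mulVec, Finset.mul_sum]
  have e1 : x ⬝ᵥ Δᵀ.mulVec x = x ⬝ᵥ Δ.mulVec x := by
    rw [e0, e0]
    rw [Finset.sum_comm]
    refine Finset.sum_congr rfl fun i _ => Finset.sum_congr rfl fun j _ => ?_
    rw [Matrix.transpose_apply]; ring
  have e2 : ((Matrix.vecMulVec x x) * Δ).trace = x ⬝ᵥ Δᵀ.mulVec x := by
    rw [e0, Matrix.trace]
    refine Finset.sum_congr rfl fun i _ => ?_
    rw [Matrix.diag_apply, Matrix.mul_apply]
    refine Finset.sum_congr rfl fun j _ => ?_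
    rw [Matrix.vecMulVec_apply, Matrix.transpose_apply]; ring
  rw [Matrix.smul_mulVec, Matrix.add_mulVec, dotProduct_smul, dotProduct_add,
    smul_eq_mul, e1, e2, e1]
  ring

lemma trace_mul_symmetrize {M Δ : Matrix (Fin d) (Fin d) ℝ} (hM : Mᵀ = M) :
    (M * ((2⁻¹ : ℝ) • (Δ + Δᵀ))).trace = (M * Δ).trace := by
  have h1 : (M * Δᵀ).trace = (M * Δ).trace := by
    calc (M * Δᵀ).trace = ((M * Δᵀ)ᵀ).trace := (Matrix.trace_transpose _).symm
      _ = (Δ * Mᵀ).trace := by rw [Matrix.transpose_mul, Matrix.transpose_transpose]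
      _ = (Δ * M).trace := by rw [hM]
      _ = (M * Δ).trace := Matrix.trace_mul_comm _ _
  rw [Matrix.mul_smul, Matrix.mul_add, Matrix.trace_smul, Matrix.trace_add, h1, smul_eq_mul]
  ring

lemma exists_matrix_repr (f : Matrix (Fin d) (Fin d) ℝ →L[ℝ] ℝ) :
    ∃ Δ : Matrix (Fin d) (Fin d) ℝ, ∀ N, f N = (N * Δ).trace := by
  classical
  refine ⟨Matrix.of fun k i => f (Matrix.single i k 1), fun N => ?_⟩
  have hsb : ∀ (i j : Fin d) (cc : ℝ),
      Matrix.single i j cc = cc • Matrix.single i j 1 := by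
    intro i j cc
    rw [Matrix.smul_single, smul_eq_mul, mul_one]
  conv_lhs => rw [Matrix.matrix_eq_sum_single N]
  rw [map_sum]
  have : ∀ i, f (∑ j, Matrix.single i j (N i j))
      = ∑ j, N i j * f (Matrix.single i j 1) := by
    intro i
    rw [map_sum]
    refine Finset.sum_congr rfl fun j _ => ?_
    rw [hsb i j (N i j), _root_.map_smul, smul_eq_mul]
  rw [Finset.sum_congr rfl fun i _ => this i]
  rw [Matrix.trace]
  refine Finset.sum_congr rfl fun i _ => ?_
  rw [Matrix.diag_apply, Matrix.mul_apply]
  refine Finset.sum_congr rfl fun j _ => ?_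
  rw [Matrix.of_apply]

lemma continuous_sumAbs :
    Continuous (fun M : Matrix (Fin d) (Fin d) ℝ => ∑ i, ∑ j, |M i j|) := by
  refine continuous_finset_sum _ fun i _ => continuous_finset_sum _ fun j _ => ?_
  exact (Continuous.matrix_elem continuous_id i j).abs

lemma g_sub_le (A B : Matrix (Fin d) (Fin d) ℝ) :
    g A ≤ g B + ∑ i, ∑ j, |(A - B) i j| := by
  refine g_le A fun δ hδ => ?_
  have h1 : δ ⬝ᵥ A.mulVec δ = δ ⬝ᵥ B.mulVec δ + δ ⬝ᵥ (A - B).mulVec δ := by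
    rw [← dotProduct_add, ← Matrix.add_mulVec, add_sub_cancel]
  rw [h1]
  exact add_le_add (le_g B hδ) (quad_le_sum_abs (A - B) hδ)

lemma continuous_g : Continuous (g (d := d)) := by
  rw [continuous_iff_continuousAt]
  intro B
  have hup : ∀ A : Matrix (Fin d) (Fin d) ℝ, g A ≤ g B + ∑ i, ∑ j, |(A - B) i j| :=
    fun A => g_sub_le A B
  have hlo : ∀ A : Matrix (Fin d) (Fin d) ℝ, g B - ∑ i, ∑ j, |(B - A) i j| ≤ g A :=
    fun A => sub_le_iff_le_add.mpr (g_sub_le B A)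
  have hc1 : Continuous fun A : Matrix (Fin d) (Fin d) ℝ =>
      g B - ∑ i, ∑ j, |(B - A) i j| :=
    continuous_const.sub (continuous_sumAbs.comp (continuous_const.sub continuous_id))
  have hc2 : Continuous fun A : Matrix (Fin d) (Fin d) ℝ =>
      g B + ∑ i, ∑ j, |(A - B) i j| :=
    continuous_const.add (continuous_sumAbs.comp (continuous_id.sub continuous_const))
  have ht1 : Filter.Tendsto (fun A : Matrix (Fin d) (Fin d) ℝ =>
      g B - ∑ i, ∑ j, |(B - A) i j|) (nhds B) (nhds (g B)) := by
    have := hc1.tendsto B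
    simpa using this
  have ht2 : Filter.Tendsto (fun A : Matrix (Fin d) (Fin d) ℝ =>
      g B + ∑ i, ∑ j, |(A - B) i j|) (nhds B) (nhds (g B)) := by
    have := hc2.tendsto B
    simpa using this
  exact tendsto_of_tendsto_of_tendsto_of_le_of_le ht1 ht2 hlo hup

lemma g_convex_sublevel (c : ℝ) :
    Convex ℝ {N : Matrix (Fin d) (Fin d) ℝ | g N < c} := by
  have hcvx : ConvexOn ℝ Set.univ (g (d := d)) := by
    refine ⟨convex_univ, fun A _ B _ a b ha hb hab => ?_⟩
    refine g_le _ fun δ hδ => ?_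
    have h1 : δ ⬝ᵥ (a • A + b • B).mulVec δ
        = a * (δ ⬝ᵥ A.mulVec δ) + b * (δ ⬝ᵥ B.mulVec δ) := by
      rw [Matrix.add_mulVec, Matrix.smul_mulVec, Matrix.smul_mulVec,
        dotProduct_add, dotProduct_smul, dotProduct_smul, smul_eq_mul, smul_eq_mul]
    rw [h1]
    exact add_le_add (mul_le_mul_of_nonneg_left (le_g A hδ) ha)
      (mul_le_mul_of_nonneg_left (le_g B hδ) hb)
  have := hcvx.convex_lt c
  simpa [Set.sep_univ] using this

lemma psd_quad_nonneg {P : Matrix (Fin d) (Fin d) ℝ} (hP : P.PosSemidef) (x : Fin d → ℝ) :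
    0 ≤ x ⬝ᵥ P.mulVec x := by
  have := hP.dotProduct_mulVec_nonneg x
  rwa [show star x = x from funext fun i => by simp] at this

lemma dot_self_le_one {δ : EuclideanSpace ℝ (Fin d)} (hδ : ‖δ‖ ≤ 1) :
    (δ : Fin d → ℝ) ⬝ᵥ δ ≤ 1 := by
  calc (δ : Fin d → ℝ) ⬝ᵥ δ = ∑ j, δ j ^ 2 := by simp [dotProduct, sq]
    _ ≤ 1 := sq_sum_le hδ

lemma quad_smul_one (a : ℝ) (δ : Fin d → ℝ) :
    δ ⬝ᵥ ((a • (1 : Matrix (Fin d) (Fin d) ℝ)).mulVec δ) = a * (δ ⬝ᵥ δ) := by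
  rw [Matrix.smul_mulVec, Matrix.one_mulVec, dotProduct_smul, smul_eq_mul]

lemma g_smul_one_le {a : ℝ} (ha : 0 ≤ a) :
    g (a • (1 : Matrix (Fin d) (Fin d) ℝ)) ≤ a := by
  refine g_le _ fun δ hδ => ?_
  rw [quad_smul_one]
  calc a * ((δ : Fin d → ℝ) ⬝ᵥ δ) ≤ a * 1 :=
        mul_le_mul_of_nonneg_left (dot_self_le_one hδ) ha
    _ = a := mul_one a

end UadAux

/-- **Theorem 2, part 2 (rank-constrained saddle-point form).** For a nonempty convex
compact set `𝓜` of real symmetric PSD matrices, if every minimizer of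
`V(M) = sup_{‖δ‖ ≤ 1} δᵀMδ` over `𝓜` has largest eigenvalue of multiplicity at most `r`,
then the rank-`r`-constrained universal adversarial direction game with payoff
`trace(M·Δ)` has a saddle point `(Δ*, M*)` with `Δ*` PSD, `trace(Δ*) ≤ 1`, `rank(Δ*) ≤ r`. -/
theorem uad_game_rank_r_nash_of_top_eigenvalue_multiplicity
    {d : ℕ} (𝓜 : Set (Matrix (Fin d) (Fin d) ℝ))
    (hne : 𝓜.Nonempty) (hconv : Convex ℝ 𝓜) (hcpt : IsCompact 𝓜)
    (hpsd : ∀ M ∈ 𝓜, M.PosSemidef)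
    (r : ℕ) (hr : 1 ≤ r)
    (V : Matrix (Fin d) (Fin d) ℝ → ℝ)
    (hV : ∀ M, V M =
      sSup ((fun δ : EuclideanSpace ℝ (Fin d) => δ ⬝ᵥ M.mulVec δ) ''
        {δ : EuclideanSpace ℝ (Fin d) | ‖δ‖ ≤ 1}))
    (hmult : ∀ Mstar ∈ 𝓜, (∀ M ∈ 𝓜, V Mstar ≤ V M) →
      Module.finrank ℝ (Module.End.eigenspace (Matrix.toLin' Mstar) (V Mstar)) ≤ r) :
    ∃ Mstar ∈ 𝓜, ∃ Δstar : Matrix (Fin d) (Fin d) ℝ,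
      Δstar.PosSemidef ∧ Δstar.trace ≤ 1 ∧ Δstar.rank ≤ r ∧
      (∀ Δ : Matrix (Fin d) (Fin d) ℝ, Δ.PosSemidef → Δ.trace ≤ 1 → Δ.rank ≤ r →
        (Mstar * Δ).trace ≤ (Mstar * Δstar).trace) ∧
      (∀ M ∈ 𝓜, (Mstar * Δstar).trace ≤ (M * Δstar).trace) := by
  classical
  obtain ⟨M0, hM0, hminOn⟩ := hcpt.exists_isMinOn hne UadAux.continuous_g.continuousOn
  have hmin : ∀ M ∈ 𝓜, UadAux.g M0 ≤ UadAux.g M := fun M hM => isMinOn_iff.mp hminOn M hM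
  have hVg : ∀ M, V M = UadAux.g M := hV
  set c := UadAux.g M0 with hc_def
  have hc0 : 0 ≤ c := UadAux.g_nonneg M0
  have hM0psd := hpsd M0 hM0
  have hmult0 : Module.finrank ℝ (Module.End.eigenspace (Matrix.toLin' M0) c) ≤ r := by
    have := hmult M0 hM0 (fun M hM => by rw [hVg, hVg]; exact hmin M hM)
    rwa [hVg M0] at this
  rcases hc0.eq_or_lt with hceq | hcpos
  · -- degenerate case: the minimum value is 0, so M0 = 0
    have hM0zero : M0 = 0 := by
      have hmv : ∀ x : Fin d → ℝ, M0.mulVec x = 0 := by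
        intro x
        have h1 : x ⬝ᵥ M0.mulVec x ≤ c * (x ⬝ᵥ x) := UadAux.quad_le_g_mul M0 x
        have h2 : 0 ≤ x ⬝ᵥ M0.mulVec x := UadAux.psd_quad_nonneg hM0psd x
        have hxx : 0 ≤ x ⬝ᵥ x := by
          refine Finset.sum_nonneg fun i _ => mul_self_nonneg _
        have h3 : x ⬝ᵥ M0.mulVec x = 0 := by nlinarith
        have h4 : star x ⬝ᵥ M0.mulVec x = 0 := by
          rwa [show star x = x from funext fun i => by simp]
        exact (hM0psd.dotProduct_mulVec_zero_iff x).mp h4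
      ext i j
      have := congrFun (hmv (Pi.single j 1)) i
      rw [Matrix.mulVec_single] at this
      simpa using this
    refine ⟨M0, hM0, 0, Matrix.PosSemidef.zero, ?_, ?_, ?_, ?_⟩
    · rw [Matrix.trace_zero]; exact zero_le_one
    · rw [Matrix.rank_zero]; exact Nat.zero_le r
    · intro Δ hΔ htr hrk
      rw [hM0zero, Matrix.zero_mul, Matrix.zero_mul]
    · intro M hM
      rw [Matrix.mul_zero, Matrix.mul_zero]
  · -- main case: c > 0; separate 𝓜 from the open convex sublevel set {g < c}
    set U := {N : Matrix (Fin d) (Fin d) ℝ | UadAux.g N < c} with hU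
    have hUopen : IsOpen U := isOpen_lt UadAux.continuous_g continuous_const
    have hUconv : Convex ℝ U := UadAux.g_convex_sublevel c
    have hdisj : Disjoint U 𝓜 := by
      rw [Set.disjoint_left]
      intro N hNU hNM
      exact absurd (hmin N hNM) (not_le.mpr hNU)
    obtain ⟨f, u, hfu, hfM⟩ := geometric_hahn_banach_open hUconv hUopen hconv hdisj
    obtain ⟨Δraw, hΔraw⟩ := UadAux.exists_matrix_repr f
    have hmemU : ∀ a : ℝ, 0 ≤ a → a < c → (a • (1 : Matrix (Fin d) (Fin d) ℝ)) ∈ U := by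
      intro a ha hac
      show UadAux.g _ < c
      exact lt_of_le_of_lt (UadAux.g_smul_one_le ha) hac
    have hNt : ∀ (P : Matrix (Fin d) (Fin d) ℝ), P.PosSemidef → ∀ t : ℝ, 0 ≤ t →
        ((c/2) • (1 : Matrix (Fin d) (Fin d) ℝ) - t • P) ∈ U := by
      intro P hP t ht
      show UadAux.g _ < c
      have hle : UadAux.g ((c/2) • (1 : Matrix (Fin d) (Fin d) ℝ) - t • P) ≤ c/2 := by
        refine UadAux.g_le _ fun δ hδ => ?_
        have he : δ ⬝ᵥ ((c/2) • (1 : Matrix (Fin d) (Fin d) ℝ) - t • P).mulVec δ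
            = (c/2) * ((δ : Fin d → ℝ) ⬝ᵥ δ) - t * (δ ⬝ᵥ P.mulVec δ) := by
          rw [Matrix.sub_mulVec, dotProduct_sub, UadAux.quad_smul_one,
            Matrix.smul_mulVec, dotProduct_smul, smul_eq_mul]
        rw [he]
        have h1 : (c/2) * ((δ : Fin d → ℝ) ⬝ᵥ δ) ≤ (c/2) * 1 :=
          mul_le_mul_of_nonneg_left (UadAux.dot_self_le_one hδ) (by linarith)
        have h2 : 0 ≤ t * (δ ⬝ᵥ P.mulVec δ) :=
          mul_nonneg ht (UadAux.psd_quad_nonneg hP δ)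
        linarith
      linarith
    have hfP : ∀ P : Matrix (Fin d) (Fin d) ℝ, P.PosSemidef → 0 ≤ f P := by
      intro P hP
      by_contra hneg
      push_neg at hneg
      have hbase : ∀ t : ℝ, 0 ≤ t → (c/2) * f 1 - t * f P < u := by
        intro t ht
        have := hfu _ (hNt P hP t ht)
        rwa [map_sub, f.map_smul, f.map_smul, smul_eq_mul, smul_eq_mul] at this
      have h0 : (c/2) * f 1 < u := by simpa using hbase 0 le_rfl
      set t0 : ℝ := (u - (c/2) * f 1) / (-(f P)) with ht0
      have ht0pos : 0 < t0 := div_pos (by linarith) (by linarith)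
      have heval : t0 * f P = -(u - (c/2) * f 1) := by
        rw [ht0, div_mul_eq_mul_div, div_eq_iff (by linarith : -(f P) ≠ 0)]
        ring
      have := hbase t0 ht0pos.le
      rw [heval] at this
      linarith
    have honepos : (0:ℝ) ≤ f 1 := hfP 1 Matrix.PosSemidef.one
    have hT : 0 < f 1 := by
      rcases honepos.eq_or_lt with hzero | hpos
      swap
      · exact hpos
      · exfalso
        have hP0 : ∀ P : Matrix (Fin d) (Fin d) ℝ, P.PosSemidef → f P = 0 := by
          intro P hP
          have h1 : 0 ≤ f ((UadAux.g P) • 1 - P) :=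
            hfP _ (UadAux.g_smul_one_sub_psd P hP.1)
          rw [map_sub, f.map_smul, smul_eq_mul, ← hzero, mul_zero] at h1
          have h2 := hfP P hP
          linarith
        have hin := hmemU (c/2) (by linarith) (by linarith)
        have h2 := hfu _ hin
        rw [f.map_smul, smul_eq_mul, ← hzero, mul_zero] at h2
        have h3 := hfM M0 hM0
        rw [hP0 M0 hM0psd] at h3
        linarith
    have hlb : ∀ M ∈ 𝓜, c * f 1 ≤ f M := by
      intro M hM
      by_contra hlt
      push_neg at hlt
      have h0 : (c/2) * f 1 < u := by
        have := hfu _ (hmemU (c/2) (by linarith) (by linarith))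
        rwa [f.map_smul, smul_eq_mul] at this
      have hfMpos : 0 < f M := by
        have := hfM M hM
        nlinarith
      set a : ℝ := f M / f 1 with ha_def
      have ha_pos : 0 < a := div_pos hfMpos hT
      have ha_lt : a < c := (div_lt_iff₀ hT).mpr (by linarith)
      have := hfu _ (hmemU a ha_pos.le ha_lt)
      rw [f.map_smul, smul_eq_mul] at this
      have hcancel : a * f 1 = f M := div_mul_cancel₀ _ hT.ne'
      have := hfM M hM
      linarith
    set Δsym : Matrix (Fin d) (Fin d) ℝ := (2⁻¹ : ℝ) • (Δraw + Δrawᵀ) with hΔsym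
    have hΔsymPSD : Δsym.PosSemidef := by
      refine Matrix.PosSemidef.of_dotProduct_mulVec_nonneg ?_ ?_
      · show Δsymᴴ = Δsym
        rw [hΔsym, UadAux.real_conjTranspose, Matrix.transpose_smul, Matrix.transpose_add,
          Matrix.transpose_transpose, add_comm]
      · intro y
        have hstar : star y = y := funext fun i => by simp
        rw [hstar, hΔsym, UadAux.quad_sym_eq y Δraw, ← hΔraw]
        exact hfP _ (UadAux.vecMulVec_posSemidef y)
    have hfeq_symm : ∀ M : Matrix (Fin d) (Fin d) ℝ, Mᵀ = M → (M * Δsym).trace = f M := by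
      intro M hMt
      rw [hΔsym, UadAux.trace_mul_symmetrize hMt, ← hΔraw]
    have htraceΔsym : Δsym.trace = f 1 := by
      have := hfeq_symm 1 Matrix.transpose_one
      rwa [Matrix.one_mul] at this
    set Δstar : Matrix (Fin d) (Fin d) ℝ := (f 1)⁻¹ • Δsym with hΔstar
    have hΔstarPSD : Δstar.PosSemidef := UadAux.psd_smul (inv_nonneg.mpr hT.le) hΔsymPSD
    have htraceΔstar : Δstar.trace = 1 := by
      rw [hΔstar, Matrix.trace_smul, htraceΔsym, smul_eq_mul, inv_mul_cancel₀ hT.ne']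
    have hMlow : ∀ M ∈ 𝓜, c ≤ (M * Δstar).trace := by
      intro M hM
      have hMt : Mᵀ = M := UadAux.real_transpose_eq_of_isHermitian (hpsd M hM).1
      have he : (M * Δstar).trace = (f 1)⁻¹ * f M := by
        rw [hΔstar, Matrix.mul_smul, Matrix.trace_smul, smul_eq_mul, hfeq_symm M hMt]
      rw [he]
      have hlbM := hlb M hM
      calc c = (f 1)⁻¹ * (c * f 1) := by field_simp
        _ ≤ (f 1)⁻¹ * f M := mul_le_mul_of_nonneg_left hlbM (inv_nonneg.mpr hT.le)
    have hupper : ∀ Δ : Matrix (Fin d) (Fin d) ℝ, Δ.PosSemidef → Δ.trace ≤ 1 →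
        (M0 * Δ).trace ≤ c := by
      intro Δ hΔ htr
      have h1 := UadAux.trace_mul_le_g hM0psd.1 hΔ
      have h2 : UadAux.g M0 * Δ.trace ≤ c * 1 := by
        rw [← hc_def]
        exact mul_le_mul_of_nonneg_left htr hc0
      rw [mul_one] at h2
      calc (M0 * Δ).trace ≤ UadAux.g M0 * Δ.trace := h1
        _ ≤ c := h2
    have heq : (M0 * Δstar).trace = c :=
      le_antisymm (hupper Δstar hΔstarPSD (le_of_eq htraceΔstar)) (hMlow M0 hM0)
    have hPpsd : ((c • 1 - M0) : Matrix (Fin d) (Fin d) ℝ).PosSemidef := by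
      rw [hc_def]
      exact UadAux.g_smul_one_sub_psd M0 hM0psd.1
    have htr0 : ((c • 1 - M0) * Δstar).trace = 0 := by
      rw [Matrix.sub_mul, Matrix.smul_mul, Matrix.one_mul, Matrix.trace_sub,
        Matrix.trace_smul, htraceΔstar, heq, smul_eq_mul, mul_one, sub_self]
    have hzero : ((c • 1 - M0) : Matrix (Fin d) (Fin d) ℝ) * Δstar = 0 :=
      UadAux.psd_mul_psd_eq_zero_of_trace_eq_zero hPpsd hΔstarPSD htr0
    have hMΔ : M0 * Δstar = c • Δstar := by
      rw [Matrix.sub_mul] at hzero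
      have h1 := sub_eq_zero.mp hzero
      rw [Matrix.smul_mul, Matrix.one_mul] at h1
      exact h1.symm
    have hrange : LinearMap.range Δstar.mulVecLin ≤
        Module.End.eigenspace (Matrix.toLin' M0) c := by
      rintro y ⟨x, rfl⟩
      rw [Module.End.mem_eigenspace_iff, Matrix.toLin'_apply,
        Matrix.mulVecLin_apply, Matrix.mulVec_mulVec, hMΔ, Matrix.smul_mulVec]
    have hrank : Δstar.rank ≤ r := by
      have h1 : Δstar.rank = Module.finrank ℝ (LinearMap.range Δstar.mulVecLin) := rfl
      rw [h1]
      exact le_trans (Submodule.finrank_mono hrange) hmult0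
    refine ⟨M0, hM0, Δstar, hΔstarPSD, le_of_eq htraceΔstar, hrank, ?_, ?_⟩
    · intro Δ hΔ htr _
      rw [heq]
      exact hupper Δ hΔ htr
    · intro M hM
      rw [heq]
      exact hMlow M hM
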